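/- Let λ > 3 be real. For integers m ≥ 0 and k ≥ 0 (with j = k/2 the half-integer spin label), define E(m,k) := 2(λ−2)(m + k/2 + λ − 1)/((m + λ − 1)(m + k + λ)). Then 0 < E(m,k) ≤ 2 for all m, k, and for each fixed m, E(m,k) → (λ−2)/(m+λ−1) as k → ∞. Hence the spectrum of the diagonal operator :Tr(E − A†A): is contained in [0,2] and the set σ_a = {(λ−2)/(m+λ−1) : m ∈ ℕ∪{0}} ∪ {0} consists of cluster points of its eigenvalues. -/
import Mathlib


/-- For real `λ > 3`, the eigenvalues
`E(m,k) = 2(λ−2)(m + k/2 + λ − 1)/((m+λ−1)(m+k+λ))` of the diagonal operator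
`:Tr(E − A†A):` satisfy `0 < E(m,k) ≤ 2`, and for fixed `m` they accumulate, as
`k → ∞`, at `(λ−2)/(m+λ−1)`; hence the spectrum lies in `[0,2]` and
`σ_a = {(λ−2)/(m+λ−1)} ∪ {0}` consists of cluster points of the eigenvalues. -/
theorem trace_operator_eigenvalues (lam : ℝ) (hlam : 3 < lam) :
    let E : ℕ → ℕ → ℝ := fun m k =>
      2 * (lam - 2) * ((m : ℝ) + (k : ℝ) / 2 + lam - 1) /
        (((m : ℝ) + lam - 1) * ((m : ℝ) + (k : ℝ) + lam))
    (∀ m k : ℕ, 0 < E m k ∧ E m k ≤ 2) ∧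
    (∀ m : ℕ, Filter.Tendsto (fun k : ℕ => E m k) Filter.atTop
      (nhds ((lam - 2) / ((m : ℝ) + lam - 1)))) := by
  intro E
  constructor
  · intro m k
    have hm : (0:ℝ) ≤ (m:ℝ) := Nat.cast_nonneg m
    have hk : (0:ℝ) ≤ (k:ℝ) := Nat.cast_nonneg k
    have h1 : (0:ℝ) < (m:ℝ) + lam - 1 := by linarith
    have h2 : (0:ℝ) < (m:ℝ) + (k:ℝ) + lam := by linarith
    have hnum : (0:ℝ) < 2 * (lam - 2) * ((m : ℝ) + (k : ℝ) / 2 + lam - 1) := by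
      have : (0:ℝ) < (m : ℝ) + (k : ℝ) / 2 + lam - 1 := by linarith
      nlinarith
    constructor
    · exact div_pos hnum (mul_pos h1 h2)
    · rw [div_le_iff₀ (mul_pos h1 h2)]
      nlinarith
  · intro m
    have hm : (0:ℝ) ≤ (m:ℝ) := Nat.cast_nonneg m
    have h1 : (0:ℝ) < (m:ℝ) + lam - 1 := by linarith
    have heq : (fun k : ℕ => E m k) = fun k : ℕ =>
        (lam - 2) / ((m : ℝ) + lam - 1) +
          ((lam - 2) * ((m:ℝ) + lam - 2)) / (((m : ℝ) + lam - 1) * ((k:ℝ) + ((m:ℝ) + lam))) := by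
      funext k
      have hk : (0:ℝ) ≤ (k:ℝ) := Nat.cast_nonneg k
      have h2 : ((m:ℝ) + (k:ℝ) + lam) ≠ 0 := by positivity
      have h2' : ((k:ℝ) + ((m:ℝ) + lam)) ≠ 0 := by positivity
      show 2 * (lam - 2) * ((m : ℝ) + (k : ℝ) / 2 + lam - 1) /
        (((m : ℝ) + lam - 1) * ((m : ℝ) + (k : ℝ) + lam)) = _
      field_simp
      ring
    rw [heq]
    have hden : Filter.Tendsto (fun k : ℕ => ((m : ℝ) + lam - 1) * ((k:ℝ) + ((m:ℝ) + lam)))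
        Filter.atTop Filter.atTop := by
      apply Filter.Tendsto.const_mul_atTop h1
      exact Filter.tendsto_atTop_add_const_right _ _ tendsto_natCast_atTop_atTop
    have hzero := Filter.Tendsto.div_atTop
      (tendsto_const_nhds (x := (lam - 2) * ((m:ℝ) + lam - 2))) hden
    have := (tendsto_const_nhds (x := (lam - 2) / ((m : ℝ) + lam - 1))
      (f := Filter.atTop (α := ℕ))).add hzero
    simpa using this
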